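/- Let α ∈ (0,∞)^d with min_j α_j > 1/2, f ∈ H^α_mix(𝕋^d) with Fourier coefficients c = (f̂_n)_{n ∈ ℤ^d}, h(α) = min_j α_j, and p(α) the number of j with α_j = h(α). Then for all s ≥ 2, the ℓ^2 best s-term approximation error satisfies σ_s(c)_2 ≲_{α,d} s^{−h(α)} (log s)^{h(α)(p(α)−1)} ‖f‖_{H^α_mix}. -/

import Mathlib

open Real Finset

section Aux

variable {d : ℕ}

/-- hyperbolic cross set -/
def crossSet (β : Fin d → ℝ) (J : Finset (Fin d)) (r : ℝ) : Set (Fin d → ℤ) :=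
  {n | (∀ j ∉ J, n j = 0) ∧ ∏ j ∈ J, (1 + |(n j : ℝ)|) ^ (β j) ≤ r}

lemma one_le_fac (b : ℝ) (hb : 0 ≤ b) (x : ℤ) : 1 ≤ (1 + |(x : ℝ)|) ^ b :=
  Real.one_le_rpow (by linarith [abs_nonneg (x : ℝ)]) hb

lemma one_le_cross_prod {β : Fin d → ℝ} (hβ : ∀ j, 1 ≤ β j) (J : Finset (Fin d))
    (n : Fin d → ℤ) : 1 ≤ ∏ i ∈ J, (1 + |(n i : ℝ)|) ^ (β i) := by
  have := Finset.prod_le_prod (s := J) (f := fun _ => (1:ℝ))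
    (g := fun i => (1 + |(n i : ℝ)|) ^ (β i)) (fun i _ => zero_le_one)
    (fun i _ => one_le_fac _ (by linarith [hβ i]) _)
  simpa using this

lemma fac_le_prod {β : Fin d → ℝ} (hβ : ∀ j, 1 ≤ β j) {J : Finset (Fin d)}
    {j : Fin d} (hj : j ∈ J) (n : Fin d → ℤ) :
    (1 + |(n j : ℝ)|) ^ (β j) ≤ ∏ i ∈ J, (1 + |(n i : ℝ)|) ^ (β i) := by
  rw [← Finset.mul_prod_erase J _ hj]
  exact le_mul_of_one_le_right (by positivity) (one_le_cross_prod hβ _ n)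

lemma base_le_fac {β : Fin d → ℝ} (hβ : ∀ j, 1 ≤ β j) (j : Fin d) (n : Fin d → ℤ) :
    (1 + |(n j : ℝ)|) ≤ (1 + |(n j : ℝ)|) ^ (β j) := by
  nth_rewrite 1 [← Real.rpow_one (1 + |(n j : ℝ)|)]
  exact Real.rpow_le_rpow_of_exponent_le (by linarith [abs_nonneg ((n j : ℝ))]) (hβ j)

lemma crossSet_empty {β : Fin d → ℝ} (hβ : ∀ j, 1 ≤ β j) (J : Finset (Fin d)) {r : ℝ}
    (hr : r < 1) : crossSet β J r = ∅ := by
  ext n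
  simp only [crossSet, Set.mem_setOf_eq, Set.mem_empty_iff_false, iff_false, not_and]
  intro _
  push_neg
  exact lt_of_lt_of_le hr (one_le_cross_prod hβ J n)

lemma crossSet_finite (β : Fin d → ℝ) (hβ : ∀ j, 1 ≤ β j) (J : Finset (Fin d)) (r : ℝ) :
    (crossSet β J r).Finite := by
  have : crossSet β J r ⊆ Set.pi Set.univ (fun _ : Fin d => Set.Icc (-max 1 ⌈r⌉) (max 1 ⌈r⌉)) := by
    rintro n ⟨hsupp, hprod⟩
    intro j _
    by_cases hj : j ∈ J
    · have h1 : (1 + |(n j : ℝ)|) ≤ r :=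
        (base_le_fac hβ j n).trans ((fac_le_prod hβ hj n).trans hprod)
      have h2 : |(n j : ℝ)| ≤ (⌈r⌉ : ℝ) := by
        have := Int.le_ceil r
        linarith
      have h3 : |n j| ≤ ⌈r⌉ := by exact_mod_cast (by push_cast at h2 ⊢ ; exact h2 : (|n j| : ℝ) ≤ (⌈r⌉ : ℝ))
      rw [Set.mem_Icc]
      constructor
      · have := (abs_le.mp h3).1
        exact le_trans (by simp) this
      · exact le_trans (le_abs_self _) (h3.trans (le_max_right 1 ⌈r⌉))
    · rw [hsupp j hj, Set.mem_Icc]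
      constructor
      · have : (0:ℤ) ≤ max 1 ⌈r⌉ := le_trans (by norm_num) (le_max_left 1 ⌈r⌉)
        linarith
      · exact le_trans (by norm_num) (le_max_left 1 ⌈r⌉)
  exact Set.Finite.subset (Set.Finite.pi (fun _ => Set.finite_Icc _ _)) this

lemma cross_ncard_empty {β : Fin d → ℝ} (r : ℝ) : (crossSet β (∅ : Finset (Fin d)) r).ncard ≤ 1 := by
  have : crossSet β (∅ : Finset (Fin d)) r ⊆ {fun _ => 0} := by
    rintro n ⟨hsupp, -⟩
    simp only [Set.mem_singleton_iff]
    funext j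
    exact hsupp j (Finset.notMem_empty j)
  exact le_trans (Set.ncard_le_ncard this (Set.finite_singleton _)) (by simp)

lemma card_cross_insert {β : Fin d → ℝ} (hβ : ∀ j, 1 ≤ β j) {a : Fin d} {J : Finset (Fin d)}
    (ha : a ∉ J) (r : ℝ) :
    ((crossSet β (insert a J) r).ncard : ℝ) ≤
      ∑ k ∈ Finset.Icc (-⌈r⌉) ⌈r⌉,
        ((crossSet β J (r / (1 + |(k : ℝ)|) ^ (β a))).ncard : ℝ) := by
  have hfinBig := crossSet_finite β hβ (insert a J) r
  have hfin : ∀ k : ℤ, (crossSet β J (r / (1 + |(k : ℝ)|) ^ (β a))).Finite :=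
    fun k => crossSet_finite β hβ J _
  -- the sigma finset
  set T : Finset (Σ _ : ℤ, (Fin d → ℤ)) :=
    (Finset.Icc (-⌈r⌉) ⌈r⌉).sigma (fun k => (hfin k).toFinset) with hT
  have hcard : (crossSet β (insert a J) r).ncard ≤ T.card := by
    rw [Set.ncard_eq_toFinset_card _ hfinBig]
    apply Finset.card_le_card_of_injOn (fun n => ⟨n a, Function.update n a 0⟩)
    · intro n hn
      rw [Finset.mem_coe, Set.Finite.mem_toFinset] at hn
      obtain ⟨hsupp, hprod⟩ := hn
      rw [Finset.prod_insert ha] at hprod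
      have hpos : (0:ℝ) < (1 + |(n a : ℝ)|) ^ (β a) :=
        lt_of_lt_of_le zero_lt_one (one_le_fac _ (by linarith [hβ a]) _)
      have hrest : 1 ≤ ∏ i ∈ J, (1 + |(n i : ℝ)|) ^ (β i) := one_le_cross_prod hβ J n
      have hfa : (1 + |(n a : ℝ)|) ^ (β a) ≤ r := by
        calc (1 + |(n a : ℝ)|) ^ (β a) = (1 + |(n a : ℝ)|) ^ (β a) * 1 := (mul_one _).symm
        _ ≤ (1 + |(n a : ℝ)|) ^ (β a) * ∏ i ∈ J, (1 + |(n i : ℝ)|) ^ (β i) := by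
            exact mul_le_mul_of_nonneg_left hrest (le_of_lt hpos)
        _ ≤ r := hprod
      have hbase : (1 + |(n a : ℝ)|) ≤ r := le_trans (base_le_fac hβ a n) hfa
      have hmemIcc : n a ∈ Finset.Icc (-⌈r⌉) ⌈r⌉ := by
        have h2 : |(n a : ℝ)| ≤ (⌈r⌉ : ℝ) := by have := Int.le_ceil r; linarith
        have h3 : |n a| ≤ ⌈r⌉ := by exact_mod_cast h2
        rw [Finset.mem_Icc]
        exact ⟨neg_le_of_abs_le h3, le_of_abs_le h3⟩
      have hmemFib : Function.update n a 0 ∈ (hfin (n a)).toFinset := by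
        rw [Set.Finite.mem_toFinset]
        constructor
        · intro j hj
          by_cases hja : j = a
          · subst hja; simp [Function.update_self]
          · rw [Function.update_of_ne hja]
            exact hsupp j (by simp [Finset.mem_insert, hja, hj])
        · have heq : ∏ i ∈ J, (1 + |((Function.update n a 0 i) : ℝ)|) ^ (β i)
              = ∏ i ∈ J, (1 + |(n i : ℝ)|) ^ (β i) := by
            apply Finset.prod_congr rfl
            intro i hi
            rw [Function.update_of_ne (by rintro rfl; exact ha hi)]
          rw [heq, le_div_iff₀ hpos, mul_comm]
          exact hprod
      exact Finset.mem_sigma.mpr ⟨hmemIcc, hmemFib⟩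
    · intro n hn m hm hnm
      rw [Sigma.ext_iff] at hnm
      obtain ⟨h1, h2⟩ := hnm
      have h2' : Function.update n a 0 = Function.update m a 0 := eq_of_heq h2
      funext j
      by_cases hja : j = a
      · subst hja; exact h1
      · have := congrFun h2' j
        rwa [Function.update_of_ne hja, Function.update_of_ne hja] at this
  have hTcard : (T.card : ℝ) = ∑ k ∈ Finset.Icc (-⌈r⌉) ⌈r⌉,
      ((crossSet β J (r / (1 + |(k : ℝ)|) ^ (β a))).ncard : ℝ) := by
    rw [hT, Finset.card_sigma]
    push_cast
    apply Finset.sum_congr rfl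
    intro k _
    rw [Set.ncard_eq_toFinset_card _ (hfin k)]
  calc ((crossSet β (insert a J) r).ncard : ℝ) ≤ (T.card : ℝ) := by exact_mod_cast hcard
    _ = _ := hTcard

lemma log_step (K : ℕ) : (1 : ℝ) / (K + 2) ≤ Real.log (K + 2) - Real.log (K + 1) := by
  have h1 : (0:ℝ) < K + 1 := by positivity
  have h2 : (0:ℝ) < K + 2 := by positivity
  have := Real.log_le_sub_one_of_pos (x := ((K:ℝ) + 1) / (K + 2)) (by positivity)
  rw [Real.log_div (ne_of_gt h1) (ne_of_gt h2)] at this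
  have heq : ((K:ℝ) + 1) / (K + 2) - 1 = -(1 / (K + 2)) := by field_simp; norm_num
  rw [heq] at this
  linarith

lemma sum_inv_icc (K : ℕ) :
    ∑ k ∈ Finset.Icc (-(K:ℤ)) K, (1 + |(k:ℝ)|)⁻¹ ≤ 1 + 2 * Real.log (K + 1) := by
  induction K with
  | zero => simp
  | succ K ih =>
    have hset : Finset.Icc (-(K+1:ℕ):ℤ) ((K+1:ℕ):ℤ)
        = insert (-(K+1:ℕ):ℤ) (insert ((K+1:ℕ):ℤ) (Finset.Icc (-(K:ℕ):ℤ) (K:ℕ))) := by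
      ext x
      simp only [Finset.mem_Icc, Finset.mem_insert]
      omega
    have h1 : (-(K+1:ℕ):ℤ) ∉ insert ((K+1:ℕ):ℤ) (Finset.Icc (-(K:ℕ):ℤ) (K:ℕ)) := by
      simp only [Finset.mem_insert, Finset.mem_Icc]
      omega
    have h2 : ((K+1:ℕ):ℤ) ∉ Finset.Icc (-(K:ℕ):ℤ) (K:ℕ) := by
      simp only [Finset.mem_Icc]; omega
    rw [hset, Finset.sum_insert h1, Finset.sum_insert h2]
    have hv1 : (1 + |((-(K+1:ℕ):ℤ):ℝ)|)⁻¹ = 1 / ((K:ℝ) + 2) := by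
      push_cast
      rw [abs_neg, abs_of_nonneg (by positivity : (0:ℝ) ≤ (K:ℝ)+1)]
      ring_nf
    have hv2 : (1 + |(((K+1:ℕ):ℤ):ℝ)|)⁻¹ = 1 / ((K:ℝ) + 2) := by
      push_cast
      rw [abs_of_nonneg (by positivity : (0:ℝ) ≤ (K:ℝ)+1)]
      ring_nf
    rw [hv1, hv2]
    have hls := log_step K
    have hcast : ((K+1:ℕ):ℝ) + 1 = (K:ℝ) + 2 := by push_cast; ring
    rw [hcast]
    linarith

lemma sum_inv_icc_le {r R : ℝ} (hr : 0 < r) (hR : 1 ≤ R) (hrR : r ≤ R) :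
    ∑ k ∈ Finset.Icc (-⌈r⌉) ⌈r⌉, (1 + |(k:ℝ)|)⁻¹ ≤ 5 * (1 + Real.log R) := by
  have hK0 : 0 ≤ ⌈r⌉ := by positivity
  set K : ℕ := ⌈r⌉.toNat with hKdef
  have hKcast : ((K:ℤ)) = ⌈r⌉ := Int.toNat_of_nonneg hK0
  have hsum : ∑ k ∈ Finset.Icc (-⌈r⌉) ⌈r⌉, (1 + |(k:ℝ)|)⁻¹ ≤ 1 + 2 * Real.log (K + 1) := by
    rw [← hKcast]
    exact sum_inv_icc K
  have hlogR : 0 ≤ Real.log R := Real.log_nonneg hR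
  have hKr : (K : ℝ) ≤ r + 1 := by
    have h1 : (⌈r⌉ : ℝ) < r + 1 := Int.ceil_lt_add_one r
    have h2 : ((K:ℤ) : ℝ) = (⌈r⌉ : ℝ) := by exact_mod_cast hKcast
    push_cast at h2
    linarith
  have hlog : Real.log ((K:ℝ) + 1) ≤ Real.log (3 * R) := by
    apply Real.log_le_log (by positivity)
    linarith
  have hlog3 : Real.log (3 * R) = Real.log 3 + Real.log R := Real.log_mul (by norm_num) (by linarith)
  have h3 : Real.log 3 ≤ 2 := by
    have := Real.log_le_sub_one_of_pos (x := 3) (by norm_num)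
    linarith
  calc ∑ k ∈ Finset.Icc (-⌈r⌉) ⌈r⌉, (1 + |(k:ℝ)|)⁻¹ ≤ 1 + 2 * Real.log (K + 1) := hsum
    _ ≤ 1 + 2 * (2 + Real.log R) := by
        have := hlog.trans_eq hlog3
        linarith
    _ ≤ 5 * (1 + Real.log R) := by linarith

lemma cross_card_pure {β : Fin d → ℝ} (hβ : ∀ j, 1 ≤ β j) :
    ∀ (P : Finset (Fin d)) (_ : P.Nonempty), (∀ j ∈ P, β j = 1) →
    ∀ R r : ℝ, 1 ≤ R → 0 < r → r ≤ R →
    ((crossSet β P r).ncard : ℝ) ≤ 5 ^ P.card * r * (1 + Real.log R) ^ (P.card - 1) := by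
  intro P hP
  induction hP using Finset.Nonempty.cons_induction with
  | singleton a =>
    intro h1 R r hR hr hrR
    have hβa : β a = 1 := h1 a (Finset.mem_singleton_self a)
    simp only [Finset.card_singleton, pow_one, Nat.sub_self, pow_zero, mul_one]
    by_cases hr1 : r < 1
    · rw [crossSet_empty hβ _ hr1]
      simp only [Set.ncard_empty, Nat.cast_zero]
      positivity
    · push_neg at hr1
      have hstep : ((crossSet β {a} r).ncard : ℝ) ≤
          ∑ k ∈ Finset.Icc (-⌈r⌉) ⌈r⌉,
            ((crossSet β (∅ : Finset (Fin d)) (r / (1 + |(k : ℝ)|) ^ (β a))).ncard : ℝ) := by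
        have := card_cross_insert hβ (Finset.notMem_empty a) r
        simpa using this
      have hsum : ∑ k ∈ Finset.Icc (-⌈r⌉) ⌈r⌉,
            ((crossSet β (∅ : Finset (Fin d)) (r / (1 + |(k : ℝ)|) ^ (β a))).ncard : ℝ)
          ≤ ∑ _k ∈ Finset.Icc (-⌈r⌉) ⌈r⌉, (1:ℝ) := by
        apply Finset.sum_le_sum
        intro k _
        exact_mod_cast cross_ncard_empty _
      have hcard : ∑ _k ∈ Finset.Icc (-⌈r⌉) ⌈r⌉, (1:ℝ) = ((Finset.Icc (-⌈r⌉) ⌈r⌉).card : ℝ) := by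
        simp
      have hccount : ((Finset.Icc (-⌈r⌉) ⌈r⌉).card : ℝ) ≤ 2 * r + 3 := by
        rw [Int.card_Icc]
        have hK0 : (0:ℤ) ≤ ⌈r⌉ := by positivity
        have : (⌈r⌉ + 1 - -⌈r⌉) = 2*⌈r⌉ + 1 := by ring
        rw [this]
        have h2 : ((2*⌈r⌉ + 1).toNat : ℝ) = ((2*⌈r⌉ + 1 : ℤ) : ℝ) := by
          have h3 : ((2*⌈r⌉ + 1).toNat : ℤ) = 2*⌈r⌉ + 1 := Int.toNat_of_nonneg (by omega)
          exact_mod_cast congrArg (fun z : ℤ => (z : ℝ)) h3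
        rw [h2]
        push_cast
        have := Int.ceil_lt_add_one r
        push_cast at this
        linarith
      calc ((crossSet β {a} r).ncard : ℝ) ≤ ((Finset.Icc (-⌈r⌉) ⌈r⌉).card : ℝ) := by
            rw [← hcard]; exact hstep.trans hsum
        _ ≤ 2*r+3 := hccount
        _ ≤ 5 * r := by linarith
  | cons a s ha hs ih =>
    intro h1 R r hR hr hrR
    have hβa : β a = 1 := h1 a (Finset.mem_cons_self a s)
    have h1s : ∀ j ∈ s, β j = 1 := fun j hj => h1 j (Finset.mem_cons.mpr (Or.inr hj))
    have hL : (0:ℝ) < 1 + Real.log R := by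
      have := Real.log_nonneg hR; linarith
    set q := s.card with hq
    have hq1 : 1 ≤ q := hs.card_pos
    have hstep : ((crossSet β (Finset.cons a s ha) r).ncard : ℝ) ≤
        ∑ k ∈ Finset.Icc (-⌈r⌉) ⌈r⌉,
          ((crossSet β s (r / (1 + |(k : ℝ)|) ^ (β a))).ncard : ℝ) := by
      rw [Finset.cons_eq_insert]
      exact card_cross_insert hβ ha r
    have hbound : ∀ k ∈ Finset.Icc (-⌈r⌉) ⌈r⌉,
        ((crossSet β s (r / (1 + |(k : ℝ)|) ^ (β a))).ncard : ℝ) ≤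
          (5 ^ q * r * (1 + Real.log R) ^ (q - 1)) * (1 + |(k:ℝ)|)⁻¹ := by
      intro k _
      have hk1 : (1:ℝ) ≤ 1 + |(k:ℝ)| := by linarith [abs_nonneg ((k:ℝ))]
      have hk0 : (0:ℝ) < 1 + |(k:ℝ)| := by linarith
      rw [hβa, Real.rpow_one]
      have hrk0 : 0 < r / (1 + |(k:ℝ)|) := by positivity
      have hrkR : r / (1 + |(k:ℝ)|) ≤ R := by
        calc r / (1 + |(k:ℝ)|) ≤ r / 1 := by
              apply div_le_div_of_nonneg_left (le_of_lt hr) (by norm_num) hk1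
        _ = r := div_one r
        _ ≤ R := hrR
      have := ih h1s R (r / (1 + |(k:ℝ)|)) hR hrk0 hrkR
      calc ((crossSet β s (r / (1 + |(k:ℝ)|))).ncard : ℝ)
          ≤ 5 ^ q * (r / (1 + |(k:ℝ)|)) * (1 + Real.log R) ^ (q - 1) := this
        _ = (5 ^ q * r * (1 + Real.log R) ^ (q - 1)) * (1 + |(k:ℝ)|)⁻¹ := by
            rw [div_eq_mul_inv]; ring
    have hsum2 : ∑ k ∈ Finset.Icc (-⌈r⌉) ⌈r⌉,
          ((crossSet β s (r / (1 + |(k : ℝ)|) ^ (β a))).ncard : ℝ)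
        ≤ (5 ^ q * r * (1 + Real.log R) ^ (q - 1)) * (5 * (1 + Real.log R)) := by
      calc _ ≤ ∑ k ∈ Finset.Icc (-⌈r⌉) ⌈r⌉,
            (5 ^ q * r * (1 + Real.log R) ^ (q - 1)) * (1 + |(k:ℝ)|)⁻¹ :=
            Finset.sum_le_sum hbound
        _ = (5 ^ q * r * (1 + Real.log R) ^ (q - 1)) *
            ∑ k ∈ Finset.Icc (-⌈r⌉) ⌈r⌉, (1 + |(k:ℝ)|)⁻¹ := by rw [Finset.mul_sum]
        _ ≤ _ := by
            apply mul_le_mul_of_nonneg_left (sum_inv_icc_le hr hR hrR)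
            positivity
    have hfinal : (5 ^ q * r * (1 + Real.log R) ^ (q - 1)) * (5 * (1 + Real.log R))
        = 5 ^ ((Finset.cons a s ha).card) * r *
          (1 + Real.log R) ^ ((Finset.cons a s ha).card - 1) := by
      rw [Finset.card_cons]
      have e1 : (5:ℝ) ^ (q+1) = 5 ^ q * 5 := by ring
      have e2 : q + 1 - 1 = q := by omega
      have e3 : (1 + Real.log R) ^ (q - 1) * (1 + Real.log R) = (1 + Real.log R) ^ q := by
        rw [← pow_succ]
        congr 1
        omega
      rw [e1, e2, ← e3]
      ring
    exact hstep.trans (hsum2.trans_eq hfinal)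

lemma sum_rpow_bound {b : ℝ} (hb : 1 < b) :
    ∃ S : ℝ, 1 ≤ S ∧ ∀ F : Finset ℤ, ∑ k ∈ F, ((1 + |(k:ℝ)|) ^ b)⁻¹ ≤ S := by
  have hnat : Summable (fun n : ℕ => ((1 + (n:ℝ)) ^ b)⁻¹) := by
    have hg : Summable (fun n : ℕ => (((n:ℝ)) ^ b)⁻¹) :=
      (Real.summable_nat_rpow_inv).mpr hb
    have := (summable_nat_add_iff 1).mpr hg
    apply this.congr
    intro n
    have : ((n + 1 : ℕ) : ℝ) = 1 + (n:ℝ) := by push_cast; ring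
    rw [this]
  have hz : Summable (fun k : ℤ => ((1 + |(k:ℝ)|) ^ b)⁻¹) := by
    apply Summable.of_nat_of_neg
    · apply hnat.congr
      intro n
      norm_num
    · apply hnat.congr
      intro n
      push_cast
      rw [abs_neg, abs_of_nonneg (by positivity : (0:ℝ) ≤ (n:ℝ))]
  refine ⟨∑' k : ℤ, ((1 + |(k:ℝ)|) ^ b)⁻¹, ?_, ?_⟩
  · have h0 : ((1 + |((0:ℤ):ℝ)|) ^ b)⁻¹ = 1 := by norm_num
    calc (1:ℝ) = ((1 + |((0:ℤ):ℝ)|) ^ b)⁻¹ := h0.symm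
      _ ≤ _ := hz.le_tsum 0 (fun k _ => by positivity)
  · intro F
    exact hz.sum_le_tsum F (fun k _ => by positivity)

lemma cross_card_full {β : Fin d → ℝ} (hβ : ∀ j, 1 ≤ β j) (P : Finset (Fin d))
    (hPmem : ∀ j, j ∈ P ↔ β j = 1) (hP : P.Nonempty) :
    ∃ K : ℝ, 1 ≤ K ∧ ∀ R r : ℝ, 1 ≤ R → 0 < r → r ≤ R →
      ((crossSet β Finset.univ r).ncard : ℝ) ≤ K * r * (1 + Real.log R) ^ (P.card - 1) := by
  have main : ∀ D : Finset (Fin d), ∃ K : ℝ, 1 ≤ K ∧ ∀ R r : ℝ, 1 ≤ R → 0 < r → r ≤ R →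
      ((crossSet β (P ∪ D) r).ncard : ℝ) ≤ K * r * (1 + Real.log R) ^ (P.card - 1) := by
    intro D
    induction D using Finset.induction_on with
    | empty =>
      refine ⟨5 ^ P.card, one_le_pow₀ (by norm_num), ?_⟩
      intro R r hR hr hrR
      rw [Finset.union_empty]
      exact cross_card_pure hβ P hP (fun j hj => (hPmem j).mp hj) R r hR hr hrR
    | insert a D ha ih =>
      obtain ⟨K, hK1, hK⟩ := ih
      by_cases haP : a ∈ P ∪ D
      · refine ⟨K, hK1, ?_⟩
        intro R r hR hr hrR
        rw [Finset.union_insert, Finset.insert_eq_self.mpr haP]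
        exact hK R r hR hr hrR
      · have haP' : a ∉ P := fun h => haP (Finset.mem_union_left _ h)
        have hba : 1 < β a := lt_of_le_of_ne (hβ a) (fun h => haP' ((hPmem a).mpr h.symm))
        obtain ⟨S, hS1, hS⟩ := sum_rpow_bound hba
        refine ⟨K * S, by nlinarith, ?_⟩
        intro R r hR hr hrR
        have hL : (0:ℝ) < 1 + Real.log R := by
          have := Real.log_nonneg hR; linarith
        have hstep : ((crossSet β (P ∪ insert a D) r).ncard : ℝ) ≤
            ∑ k ∈ Finset.Icc (-⌈r⌉) ⌈r⌉,
              ((crossSet β (P ∪ D) (r / (1 + |(k : ℝ)|) ^ (β a))).ncard : ℝ) := by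
          rw [Finset.union_insert]
          exact card_cross_insert hβ haP r
        have hbound : ∀ k ∈ Finset.Icc (-⌈r⌉) ⌈r⌉,
            ((crossSet β (P ∪ D) (r / (1 + |(k : ℝ)|) ^ (β a))).ncard : ℝ) ≤
              (K * r * (1 + Real.log R) ^ (P.card - 1)) * ((1 + |(k:ℝ)|) ^ (β a))⁻¹ := by
          intro k _
          have hfpos : (0:ℝ) < (1 + |(k:ℝ)|) ^ (β a) := by positivity
          have hf1 : (1:ℝ) ≤ (1 + |(k:ℝ)|) ^ (β a) := one_le_fac _ (by linarith) _
          have hrk0 : 0 < r / (1 + |(k:ℝ)|) ^ (β a) := by positivity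
          have hrkR : r / (1 + |(k:ℝ)|) ^ (β a) ≤ R := by
            calc r / (1 + |(k:ℝ)|) ^ (β a) ≤ r / 1 :=
                div_le_div_of_nonneg_left (le_of_lt hr) (by norm_num) hf1
              _ = r := div_one r
              _ ≤ R := hrR
          calc ((crossSet β (P ∪ D) (r / (1 + |(k : ℝ)|) ^ (β a))).ncard : ℝ)
              ≤ K * (r / (1 + |(k:ℝ)|) ^ (β a)) * (1 + Real.log R) ^ (P.card - 1) :=
                hK R _ hR hrk0 hrkR
            _ = (K * r * (1 + Real.log R) ^ (P.card - 1)) * ((1 + |(k:ℝ)|) ^ (β a))⁻¹ := by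
                rw [div_eq_mul_inv]; ring
        calc ((crossSet β (P ∪ insert a D) r).ncard : ℝ)
            ≤ ∑ k ∈ Finset.Icc (-⌈r⌉) ⌈r⌉,
              ((crossSet β (P ∪ D) (r / (1 + |(k : ℝ)|) ^ (β a))).ncard : ℝ) := hstep
          _ ≤ ∑ k ∈ Finset.Icc (-⌈r⌉) ⌈r⌉,
              (K * r * (1 + Real.log R) ^ (P.card - 1)) * ((1 + |(k:ℝ)|) ^ (β a))⁻¹ :=
              Finset.sum_le_sum hbound
          _ = (K * r * (1 + Real.log R) ^ (P.card - 1)) *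
              ∑ k ∈ Finset.Icc (-⌈r⌉) ⌈r⌉, ((1 + |(k:ℝ)|) ^ (β a))⁻¹ := by
              rw [Finset.mul_sum]
          _ ≤ (K * r * (1 + Real.log R) ^ (P.card - 1)) * S := by
              apply mul_le_mul_of_nonneg_left (hS _)
              positivity
          _ = (K * S) * r * (1 + Real.log R) ^ (P.card - 1) := by ring
  obtain ⟨K, hK1, hK⟩ := main Finset.univ
  exact ⟨K, hK1, by simpa [Finset.union_eq_right.mpr (Finset.subset_univ P)] using hK⟩

end Aux

/-- Best `s`-term approximation rate in `H^α_mix`: for Fourier coefficient sequences `c`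
with finite mixed Sobolev norm (weights `∏_j (1+|n_j|)^{2α_j}`), with `h = min_j α_j > 1/2`
and `p` the number of minimal coordinates, for every `s ≥ 2` there is a set `S` of at most
`s` indices whose complement has `ℓ²` tail
`≲_{α,d} s^{−h} (log s)^{h(p−1)} ‖f‖_{H^α_mix}`. -/
theorem stmt10 (d : ℕ) (hd : 0 < d) (α : Fin d → ℝ) (hα : ∀ j, 1 / 2 < α j)
    (h : ℝ) (hle : ∀ j, h ≤ α j) (hmem : ∃ j, α j = h)
    (p : ℕ) (hp : p = (Finset.univ.filter (fun j => α j = h)).card) :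
    ∃ C : ℝ, 0 < C ∧ ∀ c : (Fin d → ℤ) → ℂ,
      Summable (fun n => (∏ j, (1 + |(n j : ℝ)|) ^ (2 * α j)) * ‖c n‖ ^ 2) →
      ∀ s : ℕ, 2 ≤ s → ∃ S : Finset (Fin d → ℤ), S.card ≤ s ∧
        Real.sqrt (∑' n : {n : (Fin d → ℤ) // n ∉ S}, ‖c n.1‖ ^ 2) ≤
          C * (s : ℝ) ^ (-h) * (Real.log s) ^ (h * ((p : ℝ) - 1)) *
            Real.sqrt (∑' n, (∏ j, (1 + |(n j : ℝ)|) ^ (2 * α j)) * ‖c n‖ ^ 2) := by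
  classical
  obtain ⟨j₀, hj₀⟩ := hmem
  have h0 : (0:ℝ) < h := by have := hα j₀; rw [hj₀] at this; linarith
  set β : Fin d → ℝ := fun j => α j / h with hβdef
  have hβ : ∀ j, 1 ≤ β j := fun j => (one_le_div h0).mpr (hle j)
  set P : Finset (Fin d) := Finset.univ.filter (fun j => α j = h) with hPdef
  have hPmem : ∀ j, j ∈ P ↔ β j = 1 := by
    intro j
    rw [hPdef, Finset.mem_filter]
    simp only [Finset.mem_univ, true_and, hβdef]
    rw [div_eq_one_iff_eq (ne_of_gt h0)]
  have hPne : P.Nonempty := ⟨j₀, by rw [hPdef, Finset.mem_filter]; exact ⟨Finset.mem_univ _, hj₀⟩⟩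
  have hPcard : P.card = p := hp.symm
  have hp1 : 1 ≤ p := hPcard ▸ hPne.card_pos
  obtain ⟨K, hK1, hK⟩ := cross_card_full hβ P hPmem hPne
  set B : ℝ := 1 + (Real.log 2)⁻¹ with hBdef
  have hlog2 : (0:ℝ) < Real.log 2 := Real.log_pos (by norm_num)
  have hB1 : 1 ≤ B := by
    have h1 : 0 < (Real.log 2)⁻¹ := by positivity
    rw [hBdef]
    linarith
  refine ⟨K ^ h * B ^ (h * ((p:ℝ) - 1)), by positivity, ?_⟩
  intro c hsum s hs
  -- basic facts about s
  have hs2 : (2:ℝ) ≤ (s:ℝ) := by exact_mod_cast hs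
  have hs0 : (0:ℝ) < s := by linarith
  have hlogs : Real.log 2 ≤ Real.log s := Real.log_le_log (by norm_num) hs2
  have hlogs0 : 0 < Real.log s := lt_of_lt_of_le hlog2 hlogs
  set L : ℝ := (1 + Real.log s) ^ (p - 1) with hLdef
  have hL1 : 1 ≤ L := one_le_pow₀ (by linarith)
  have hKL : (0:ℝ) < K * L := by positivity
  set R : ℝ := s / (K * L) with hRdef
  have hR0 : 0 < R := by positivity
  have hRs : R ≤ s := div_le_self (le_of_lt hs0) (by nlinarith)
  -- the set S
  have hfin := crossSet_finite β hβ Finset.univ R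
  refine ⟨hfin.toFinset, ?_, ?_⟩
  · -- cardinality bound
    have hcardeq : hfin.toFinset.card = (crossSet β Finset.univ R).ncard :=
      (Set.ncard_eq_toFinset_card _ hfin).symm
    have hcard : ((crossSet β Finset.univ R).ncard : ℝ) ≤ s := by
      by_cases hR1 : 1 ≤ R
      · have hb := hK R R hR1 hR0 le_rfl
        have hLb : (1 + Real.log R) ^ (P.card - 1) ≤ L := by
          rw [hLdef, hPcard]
          apply pow_le_pow_left₀ (by have := Real.log_nonneg hR1; linarith)
          have := Real.log_le_log hR0 hRs
          linarith
        calc ((crossSet β Finset.univ R).ncard : ℝ) ≤ K * R * (1 + Real.log R) ^ (P.card - 1) := hb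
          _ ≤ K * R * L := by
              apply mul_le_mul_of_nonneg_left hLb
              positivity
          _ = s := by
              rw [hRdef]
              field_simp
      · push_neg at hR1
        rw [crossSet_empty hβ _ hR1]
        simp only [Set.ncard_empty, Nat.cast_zero]
        positivity
    rw [hcardeq] at *
    exact_mod_cast hcard
  · -- tail bound
    set W : (Fin d → ℤ) → ℝ := fun n => ∏ j, (1 + |(n j : ℝ)|) ^ (2 * α j) with hWdef
    have hW1 : ∀ n, 1 ≤ W n := by
      intro n
      exact one_le_cross_prod (β := fun j => 2 * α j)
        (fun j => by simpa using (by linarith [hα j] : (1:ℝ) ≤ 2 * α j)) Finset.univ n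
    have hWnneg : ∀ n, 0 ≤ W n * ‖c n‖ ^ 2 := by
      intro n
      have := hW1 n
      positivity
    have hWeq : ∀ n, W n = (∏ j, (1 + |(n j : ℝ)|) ^ (β j)) ^ (2 * h) := by
      intro n
      rw [← Real.finset_prod_rpow _ _ (fun j _ => by positivity) (2*h)]
      apply Finset.prod_congr rfl
      intro j _
      rw [← Real.rpow_mul (by positivity)]
      congr 1
      rw [hβdef]
      field_simp
    have hg : Summable (fun n : Fin d → ℤ => ‖c n‖ ^ 2) := by
      apply Summable.of_nonneg_of_le (fun n => by positivity)
        (fun n => le_mul_of_one_le_left (by positivity) (hW1 n)) hsum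
    -- key pointwise bound outside S
    have hkey : ∀ n : Fin d → ℤ, n ∉ hfin.toFinset →
        ‖c n‖ ^ 2 ≤ (R ^ (2 * h))⁻¹ * (W n * ‖c n‖ ^ 2) := by
      intro n hn
      rw [Set.Finite.mem_toFinset] at hn
      have hWb : R < ∏ j, (1 + |(n j : ℝ)|) ^ (β j) := by
        by_contra hcon
        push_neg at hcon
        exact hn ⟨fun j hj => absurd (Finset.mem_univ j) hj, hcon⟩
      have hWR : R ^ (2 * h) ≤ W n := by
        rw [hWeq n]
        exact Real.rpow_le_rpow (le_of_lt hR0) (le_of_lt hWb) (by linarith)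
      have hRp : (0:ℝ) < R ^ (2 * h) := Real.rpow_pos_of_pos hR0 _
      rw [inv_mul_eq_div, le_div_iff₀ hRp]
      calc ‖c n‖ ^ 2 * R ^ (2*h) = R ^ (2*h) * ‖c n‖ ^ 2 := by ring
        _ ≤ W n * ‖c n‖ ^ 2 := mul_le_mul_of_nonneg_right hWR (by positivity)
    -- tail sum bound
    have hsub : Summable (fun n : {n : (Fin d → ℤ) // n ∉ hfin.toFinset} => ‖c n.1‖ ^ 2) :=
      hg.subtype _
    have hsubW : Summable (fun n : {n : (Fin d → ℤ) // n ∉ hfin.toFinset} =>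
        (R ^ (2 * h))⁻¹ * (W n.1 * ‖c n.1‖ ^ 2)) :=
      (hsum.subtype _).mul_left _
    have hT1 : ∑' n : {n : (Fin d → ℤ) // n ∉ hfin.toFinset}, ‖c n.1‖ ^ 2 ≤
        (R ^ (2 * h))⁻¹ * ∑' n : {n : (Fin d → ℤ) // n ∉ hfin.toFinset}, (W n.1 * ‖c n.1‖ ^ 2) := by
      rw [← tsum_mul_left]
      exact hsub.tsum_le_tsum (fun n => hkey n.1 n.2) hsubW
    have hT2 : ∑' n : {n : (Fin d → ℤ) // n ∉ hfin.toFinset}, (W n.1 * ‖c n.1‖ ^ 2) ≤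
        ∑' n, (W n * ‖c n‖ ^ 2) :=
      hsum.tsum_subtype_le (fun n => W n * ‖c n‖ ^ 2) {n | n ∉ hfin.toFinset} hWnneg
    have hA0 : 0 ≤ ∑' n, (W n * ‖c n‖ ^ 2) := tsum_nonneg hWnneg
    have hRinv : (0:ℝ) ≤ (R ^ (2 * h))⁻¹ := by positivity
    have hT : ∑' n : {n : (Fin d → ℤ) // n ∉ hfin.toFinset}, ‖c n.1‖ ^ 2 ≤
        (R ^ (2 * h))⁻¹ * ∑' n, (W n * ‖c n‖ ^ 2) :=
      hT1.trans (mul_le_mul_of_nonneg_left hT2 hRinv)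
    -- take square roots
    have hsqrt : Real.sqrt (∑' n : {n : (Fin d → ℤ) // n ∉ hfin.toFinset}, ‖c n.1‖ ^ 2) ≤
        R ^ (-h) * Real.sqrt (∑' n, (W n * ‖c n‖ ^ 2)) := by
      have e1 : (R ^ (2 * h))⁻¹ = (R ^ (-h)) ^ 2 := by
        rw [← Real.rpow_natCast (R ^ (-h)) 2, ← Real.rpow_mul (le_of_lt hR0),
          ← Real.rpow_neg (le_of_lt hR0)]
        congr 1
        push_cast
        ring
      calc Real.sqrt (∑' n : {n : (Fin d → ℤ) // n ∉ hfin.toFinset}, ‖c n.1‖ ^ 2)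
          ≤ Real.sqrt ((R ^ (2 * h))⁻¹ * ∑' n, (W n * ‖c n‖ ^ 2)) := Real.sqrt_le_sqrt hT
        _ = Real.sqrt ((R ^ (2 * h))⁻¹) * Real.sqrt (∑' n, (W n * ‖c n‖ ^ 2)) :=
            Real.sqrt_mul (by positivity) _
        _ = R ^ (-h) * Real.sqrt (∑' n, (W n * ‖c n‖ ^ 2)) := by
            rw [e1, Real.sqrt_sq (Real.rpow_nonneg (le_of_lt hR0) _)]
    -- bound R ^ (-h)
    have hRfinal : R ^ (-h) ≤ K ^ h * B ^ (h * ((p:ℝ) - 1)) * (s:ℝ) ^ (-h) *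
        (Real.log s) ^ (h * ((p:ℝ) - 1)) := by
      have hRinveq : R ^ (-h) = (K * L / s) ^ h := by
        rw [Real.rpow_neg (le_of_lt hR0), ← Real.inv_rpow (le_of_lt hR0), hRdef, inv_div]
      have hLh : L ^ h = (1 + Real.log s) ^ (((p:ℝ) - 1) * h) := by
        rw [hLdef, ← Real.rpow_natCast (1 + Real.log s) (p - 1),
          ← Real.rpow_mul (by linarith)]
        congr 2
        rw [Nat.cast_sub hp1, Nat.cast_one]
      have hBL : (1 + Real.log s) ≤ B * Real.log s := by
        rw [hBdef]
        have h1 : 1 ≤ Real.log s / Real.log 2 := (one_le_div hlog2).mpr hlogs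
        have h2 : (Real.log 2)⁻¹ * Real.log s = Real.log s / Real.log 2 := by
          rw [div_eq_mul_inv]; ring
        nlinarith
      have hexp : 0 ≤ ((p:ℝ) - 1) * h := by
        have : (1:ℝ) ≤ (p:ℝ) := by exact_mod_cast hp1
        nlinarith
      have hBLp : (1 + Real.log s) ^ (((p:ℝ) - 1) * h) ≤
          (B * Real.log s) ^ (((p:ℝ) - 1) * h) :=
        Real.rpow_le_rpow (by linarith) hBL hexp
      have hBLsplit : (B * Real.log s) ^ (((p:ℝ) - 1) * h) =
          B ^ (((p:ℝ) - 1) * h) * (Real.log s) ^ (((p:ℝ) - 1) * h) :=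
        Real.mul_rpow (by linarith) (le_of_lt hlogs0)
      have hcomm : ((p:ℝ) - 1) * h = h * ((p:ℝ) - 1) := mul_comm _ _
      have hLfin : L ^ h ≤ B ^ (h * ((p:ℝ) - 1)) * (Real.log s) ^ (h * ((p:ℝ) - 1)) := by
        rw [hLh, ← hcomm] at *
        exact hBLp.trans_eq hBLsplit
      calc R ^ (-h) = (K * L / s) ^ h := hRinveq
        _ = (K * L) ^ h / (s:ℝ) ^ h := Real.div_rpow (by positivity) (le_of_lt hs0) h
        _ = K ^ h * L ^ h * ((s:ℝ) ^ h)⁻¹ := by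
            rw [Real.mul_rpow (by positivity) (by positivity), div_eq_mul_inv]
        _ = K ^ h * L ^ h * (s:ℝ) ^ (-h) := by
            rw [Real.rpow_neg (le_of_lt hs0)]
        _ ≤ K ^ h * (B ^ (h * ((p:ℝ) - 1)) * (Real.log s) ^ (h * ((p:ℝ) - 1))) * (s:ℝ) ^ (-h) := by
            apply mul_le_mul_of_nonneg_right _ (Real.rpow_nonneg (le_of_lt hs0) _)
            apply mul_le_mul_of_nonneg_left hLfin (Real.rpow_nonneg (by positivity) _)
        _ = K ^ h * B ^ (h * ((p:ℝ) - 1)) * (s:ℝ) ^ (-h) * (Real.log s) ^ (h * ((p:ℝ) - 1)) := by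
            ring
    -- conclude
    calc Real.sqrt (∑' n : {n : (Fin d → ℤ) // n ∉ hfin.toFinset}, ‖c n.1‖ ^ 2)
        ≤ R ^ (-h) * Real.sqrt (∑' n, (W n * ‖c n‖ ^ 2)) := hsqrt
      _ ≤ (K ^ h * B ^ (h * ((p:ℝ) - 1)) * (s:ℝ) ^ (-h) * (Real.log s) ^ (h * ((p:ℝ) - 1))) *
          Real.sqrt (∑' n, (W n * ‖c n‖ ^ 2)) :=
          mul_le_mul_of_nonneg_right hRfinal (Real.sqrt_nonneg _)
      _ = K ^ h * B ^ (h * ((p:ℝ) - 1)) * (s:ℝ) ^ (-h) * (Real.log s) ^ (h * ((p:ℝ) - 1)) *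
          Real.sqrt (∑' n, (W n * ‖c n‖ ^ 2)) := by ring
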